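/- For a block-diagonal density matrix ρ = Σ_k w_k ρ_k, where the ρ_k are density matrices supported on mutually orthogonal subspaces of the form V_k^A ⊗ H_B with w_k ≥ 0, Σ w_k = 1, the entanglement negativity across the A|B cut is additive: N(ρ) = Σ_k w_k N(ρ_k). -/

import Mathlib

open Matrix
open scoped ComplexOrder

/-- The trace norm `‖M‖₁ = Tr √(MᴴM)` of a square complex matrix. -/
noncomputable def traceNorm {m : Type*} [Fintype m] [DecidableEq m]
    (M : Matrix m m ℂ) : ℝ :=
  (((Matrix.posSemidef_conjTranspose_mul_self M).1.eigenvectorUnitary : Matrix m m ℂ) *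
      diagonal (((↑) : ℝ → ℂ) ∘ (√·) ∘ (Matrix.posSemidef_conjTranspose_mul_self M).1.eigenvalues) *
      (star (Matrix.posSemidef_conjTranspose_mul_self M).1.eigenvectorUnitary : Matrix m m ℂ)).trace.re

/-- The square root of a positive semidefinite matrix (the former Mathlib definition). -/
noncomputable def Matrix.PosSemidef.sqrt {n : Type*} [Fintype n] [DecidableEq n]
    {A : Matrix n n ℂ} (hA : A.PosSemidef) : Matrix n n ℂ :=
  (hA.1.eigenvectorUnitary : Matrix n n ℂ) *
      diagonal (((↑) : ℝ → ℂ) ∘ (√·) ∘ hA.1.eigenvalues) *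
      (star hA.1.eigenvectorUnitary : Matrix n n ℂ)

section sqrtPort

open scoped MatrixOrder

lemma Matrix.PosSemidef.sqrt_eq_cfc {n : Type*} [Fintype n] [DecidableEq n]
    {A : Matrix n n ℂ} (hA : A.PosSemidef) : hA.sqrt = CFC.sqrt A := by
  rw [CFC.sqrt_eq_cfc, cfc_nnreal_eq_real _ A hA.nonneg, hA.1.cfc_eq, IsHermitian.cfc,
    Unitary.conjStarAlgAut_apply, Matrix.PosSemidef.sqrt]
  congr 3
  funext x
  simp [Real.coe_sqrt, max_eq_left (hA.eigenvalues_nonneg x)]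

lemma Matrix.PosSemidef.posSemidef_sqrt {n : Type*} [Fintype n] [DecidableEq n]
    {A : Matrix n n ℂ} (hA : A.PosSemidef) : hA.sqrt.PosSemidef := by
  rw [hA.sqrt_eq_cfc]
  exact (CFC.sqrt_nonneg A).posSemidef

lemma Matrix.PosSemidef.sqrt_mul_self {n : Type*} [Fintype n] [DecidableEq n]
    {A : Matrix n n ℂ} (hA : A.PosSemidef) : hA.sqrt * hA.sqrt = A := by
  rw [hA.sqrt_eq_cfc]
  exact CFC.sqrt_mul_sqrt_self A hA.nonneg

lemma Matrix.PosSemidef.eq_sqrt_of_sq_eq {n : Type*} [Fintype n] [DecidableEq n]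
    {A : Matrix n n ℂ} (hA : A.PosSemidef) {B : Matrix n n ℂ} (hB : B.PosSemidef)
    (hAB : A ^ 2 = B) : A = hB.sqrt := by
  rw [hB.sqrt_eq_cfc, eq_comm, CFC.sqrt_eq_iff B A hB.nonneg hA.nonneg, ← sq, hAB]

end sqrtPort

/-- The partial transpose on the `A` factor of an operator on `H_A ⊗ H_B`,
taken with respect to the chosen basis of `H_A`. -/
def ptransA {a b : Type*} (ρ : Matrix (a × b) (a × b) ℂ) :
    Matrix (a × b) (a × b) ℂ :=
  fun p q => ρ (q.1, p.2) (p.1, q.2)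

/-- The entanglement negativity `N(σ) = (‖σ^{T_A}‖₁ − 1)/2` across the `A|B` cut. -/
noncomputable def negativity {a b : Type*} [Fintype a] [Fintype b]
    [DecidableEq a] [DecidableEq b] (σ : Matrix (a × b) (a × b) ℂ) : ℝ :=
  (traceNorm (ptransA σ) - 1) / 2

lemma aux_smul_psd (c : ℝ) (hc : 0 ≤ c) {n : Type*} [Fintype n] {M : Matrix n n ℂ}
    (hM : M.PosSemidef) : ((c:ℂ) • M).PosSemidef := by
  constructor
  · unfold Matrix.IsHermitian
    rw [conjTranspose_smul, hM.1]
    simp [Complex.conj_ofReal]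
  · exact (hM.smul (show (0:ℂ) ≤ c by exact_mod_cast hc)).2

lemma aux_sqrt_mul_sqrt_eq_zero {n : Type*} [Fintype n] [DecidableEq n]
    {A B : Matrix n n ℂ} (hA : A.PosSemidef) (hB : B.PosSemidef)
    (hAB : A * B = 0) (hBA : B * A = 0) : hA.sqrt * hB.sqrt = 0 := by
  have hSA := hA.posSemidef_sqrt
  have hSB := hB.posSemidef_sqrt
  have h2 : A * hB.sqrt = 0 := by
    have h3 : hB.sqrt * A = 0 := by
      rw [← conjTranspose_mul_self_eq_zero (A := hB.sqrt * A)]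
      rw [conjTranspose_mul, hSB.1, hA.1, mul_assoc, ← mul_assoc hB.sqrt,
        hB.sqrt_mul_self, ← mul_assoc, hAB, zero_mul]
    calc A * hB.sqrt = (hB.sqrt * A)ᴴ := by rw [conjTranspose_mul, hSB.1, hA.1]
    _ = 0 := by rw [h3, conjTranspose_zero]
  rw [← conjTranspose_mul_self_eq_zero (A := hA.sqrt * hB.sqrt)]
  rw [conjTranspose_mul, hSA.1, hSB.1, mul_assoc, ← mul_assoc hA.sqrt,
    hA.sqrt_mul_self, h2, mul_zero]

/-- For a block-diagonal density matrix `ρ = Σ_k w_k ρ_k`, where each `ρ_k` is a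
density matrix supported on `V_k^A ⊗ H_B` for an orthogonal decomposition
`H_A = ⊕_k V_k^A` (blocks distinguished by the label of the `A` factor), with
`w_k ≥ 0`, `Σ w_k = 1`, the entanglement negativity across the `A|B` cut is
additive: `N(ρ) = Σ_k w_k N(ρ_k)`. -/
theorem stmt15 {a b K : Type*} [Fintype a] [Fintype b] [Fintype K]
    [DecidableEq a] [DecidableEq b] [DecidableEq K]
    (label : a → K)
    (w : K → ℝ) (hw0 : ∀ k, 0 ≤ w k) (hw1 : ∑ k, w k = 1)
    (ρk : K → Matrix (a × b) (a × b) ℂ)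
    (hpsd : ∀ k, (ρk k).PosSemidef) (htr : ∀ k, (ρk k).trace = 1)
    (hsupp : ∀ (k : K) (p q : a × b),
      (label p.1 ≠ k ∨ label q.1 ≠ k) → ρk k p q = 0) :
    negativity (∑ k, ((w k : ℝ) : ℂ) • ρk k) = ∑ k, w k * negativity (ρk k) := by
  set T : K → Matrix (a × b) (a × b) ℂ := fun k => ptransA (ρk k) with hTdef
  have hT : ∀ (k : K) (p q : a × b), (label p.1 ≠ k ∨ label q.1 ≠ k) → T k p q = 0 := by
    intro k p q h
    exact hsupp k (q.1, p.2) (p.1, q.2) h.symm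
  have hlin : ptransA (∑ k, ((w k : ℝ) : ℂ) • ρk k) = ∑ k, ((w k : ℝ) : ℂ) • T k := by
    ext p q
    simp [ptransA, hTdef, Matrix.sum_apply]
  set M : Matrix (a × b) (a × b) ℂ := ∑ k, ((w k : ℝ) : ℂ) • T k with hMdef
  have hcross : ∀ j k : K, j ≠ k → (T j)ᴴ * T k = 0 := by
    intro j k hjk
    ext p q
    rw [Matrix.mul_apply]
    simp only [Matrix.zero_apply]
    apply Finset.sum_eq_zero
    intro r _
    simp only [conjTranspose_apply]
    by_cases h : label r.1 = j
    · rw [hT k r q (Or.inl (h ▸ hjk)), mul_zero]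
    · rw [hT j r p (Or.inl h), star_zero, zero_mul]
  set A : K → Matrix (a × b) (a × b) ℂ := fun k => (T k)ᴴ * T k with hAdef
  have hApsd : ∀ k, (A k).PosSemidef := fun k => posSemidef_conjTranspose_mul_self (T k)
  have hAsupp : ∀ (k : K) (p q : a × b), (label p.1 ≠ k ∨ label q.1 ≠ k) → A k p q = 0 := by
    intro k p q h
    show ((T k)ᴴ * T k) p q = 0
    rw [Matrix.mul_apply]
    apply Finset.sum_eq_zero
    intro r _
    simp only [conjTranspose_apply]
    rcases h with h | h
    · rw [hT k r p (Or.inr h), star_zero, zero_mul]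
    · rw [hT k r q (Or.inr h), mul_zero]
  have hAA : ∀ j k : K, j ≠ k → A j * A k = 0 := by
    intro j k hjk
    ext p q
    rw [Matrix.mul_apply]
    simp only [Matrix.zero_apply]
    apply Finset.sum_eq_zero
    intro r _
    by_cases h : label r.1 = j
    · rw [hAsupp k r q (Or.inl (h ▸ hjk)), mul_zero]
    · rw [hAsupp j p r (Or.inr h), zero_mul]
  set S : Matrix (a × b) (a × b) ℂ := ∑ k, ((w k : ℝ) : ℂ) • (hApsd k).sqrt with hSdef
  have hSpsd : S.PosSemidef := by
    rw [hSdef]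
    refine Finset.sum_induction _ _ (fun x y hx hy => hx.add hy) (Matrix.PosSemidef.zero) ?_
    intro k _
    exact aux_smul_psd (w k) (hw0 k) (hApsd k).posSemidef_sqrt
  have hMM : (Mᴴ * M).PosSemidef := posSemidef_conjTranspose_mul_self M
  have hsq : S ^ 2 = Mᴴ * M := by
    rw [pow_two, hSdef, hMdef, conjTranspose_sum, Finset.sum_mul, Finset.sum_mul]
    refine Finset.sum_congr rfl ?_
    intro j _
    rw [Finset.mul_sum, Finset.mul_sum]
    refine Finset.sum_congr rfl ?_
    intro k _
    simp only [conjTranspose_smul, Matrix.smul_mul, Matrix.mul_smul]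
    rw [Complex.star_def, Complex.conj_ofReal]
    by_cases hjk : j = k
    · subst hjk
      rw [(hApsd j).sqrt_mul_self]
    · rw [hcross j k hjk,
        aux_sqrt_mul_sqrt_eq_zero (hApsd j) (hApsd k) (hAA j k hjk) (hAA k j (Ne.symm hjk))]
  have hSeq : S = hMM.sqrt := hSpsd.eq_sqrt_of_sq_eq hMM hsq
  have htrace : traceNorm M = ∑ k, w k * traceNorm (T k) := by
    show (hMM.sqrt.trace).re = _
    rw [← hSeq, hSdef, Matrix.trace_sum, Complex.re_sum]
    refine Finset.sum_congr rfl ?_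
    intro k _
    rw [Matrix.trace_smul, traceNorm]
    rw [smul_eq_mul, Complex.re_ofReal_mul]
    rfl
  rw [negativity, hlin, htrace]
  have hTk : ∀ k, ptransA (ρk k) = T k := fun _ => rfl
  simp only [negativity, hTk]
  have h2 : ∀ k, w k * ((traceNorm (T k) - 1) / 2) = (w k * traceNorm (T k) - w k) / 2 :=
    fun k => by ring
  simp only [h2]
  rw [← Finset.sum_div, Finset.sum_sub_distrib, hw1]
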